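/- For ξ > 0, the Gauss curvature K(ξ) = -(1/(2P(ξ)))·(d²/dξ²)(log P(ξ)) of the metric P(ξ)(dx²+dξ²), with P(ξ) = (e^{4ξ}+10e^{2ξ}+1)/(4(e^{2ξ}-1)²), satisfies K(ξ) < 0 for all ξ > 0. -/

import Mathlib

noncomputable def P (ξ : ℝ) : ℝ :=
  (Real.exp (4 * ξ) + 10 * Real.exp (2 * ξ) + 1) / (4 * (Real.exp (2 * ξ) - 1) ^ 2)

/-- The Gauss curvature `K = -(1/(2P))·(log P)''` of the metric `P(ξ)(dx²+dξ²)`. -/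
noncomputable def K (ξ : ℝ) : ℝ :=
  -(1 / (2 * P ξ)) * deriv (deriv (fun t => Real.log (P t))) ξ

open Real Filter Set

noncomputable def G (t : ℝ) : ℝ :=
  Real.log (Real.exp (4 * t) + 10 * Real.exp (2 * t) + 1) - Real.log 4
    - 2 * Real.log (Real.exp (2 * t) - 1)

noncomputable def G1 (t : ℝ) : ℝ :=
  (Real.exp (4 * t) * 4 + 10 * (Real.exp (2 * t) * 2)) /
      (Real.exp (4 * t) + 10 * Real.exp (2 * t) + 1)
    - 2 * ((Real.exp (2 * t) * 2) / (Real.exp (2 * t) - 1))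

noncomputable def G2 (t : ℝ) : ℝ :=
  ((Real.exp (4 * t) * 4 * 4 + 10 * (Real.exp (2 * t) * 2 * 2)) *
        (Real.exp (4 * t) + 10 * Real.exp (2 * t) + 1) -
      (Real.exp (4 * t) * 4 + 10 * (Real.exp (2 * t) * 2)) *
        (Real.exp (4 * t) * 4 + 10 * (Real.exp (2 * t) * 2))) /
      (Real.exp (4 * t) + 10 * Real.exp (2 * t) + 1) ^ 2
    - 2 * ((Real.exp (2 * t) * 2 * 2 * (Real.exp (2 * t) - 1) -
        Real.exp (2 * t) * 2 * (Real.exp (2 * t) * 2)) / (Real.exp (2 * t) - 1) ^ 2)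

lemma hN_pos (t : ℝ) : 0 < Real.exp (4 * t) + 10 * Real.exp (2 * t) + 1 := by positivity

lemma hD_pos {t : ℝ} (ht : 0 < t) : 0 < Real.exp (2 * t) - 1 := by
  have : Real.exp 0 < Real.exp (2 * t) := Real.exp_lt_exp.2 (by linarith)
  simpa using this

lemma hP_pos {t : ℝ} (ht : 0 < t) : 0 < P t := by
  have h := hD_pos ht
  exact div_pos (hN_pos t) (by positivity)

lemma hexp2 (t : ℝ) : HasDerivAt (fun s : ℝ => Real.exp (2 * s)) (Real.exp (2 * t) * 2) t := by
  have := (Real.hasDerivAt_exp (2 * t)).comp t ((hasDerivAt_id t).const_mul 2)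
  simpa [Function.comp_def] using this

lemma hexp4 (t : ℝ) : HasDerivAt (fun s : ℝ => Real.exp (4 * s)) (Real.exp (4 * t) * 4) t := by
  have := (Real.hasDerivAt_exp (4 * t)).comp t ((hasDerivAt_id t).const_mul 4)
  simpa [Function.comp_def] using this

lemma logP_eq {t : ℝ} (ht : 0 < t) : Real.log (P t) = G t := by
  have hD := hD_pos ht
  have hN := hN_pos t
  unfold P G
  rw [Real.log_div hN.ne' (by positivity), Real.log_mul (by norm_num)
    (by positivity), Real.log_pow]
  push_cast
  ring

lemma hG_deriv {t : ℝ} (ht : 0 < t) : HasDerivAt G (G1 t) t := by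
  have hD := hD_pos ht
  have hN := hN_pos t
  have h1 : HasDerivAt (fun s : ℝ => Real.exp (4 * s) + 10 * Real.exp (2 * s) + 1)
      (Real.exp (4 * t) * 4 + 10 * (Real.exp (2 * t) * 2)) t :=
    ((hexp4 t).add ((hexp2 t).const_mul 10)).add_const 1
  have h2 := (h1.log hN.ne').sub_const (Real.log 4)
  have h3 : HasDerivAt (fun s : ℝ => Real.exp (2 * s) - 1)
      (Real.exp (2 * t) * 2) t := (hexp2 t).sub_const 1
  have h4 := (h3.log hD.ne').const_mul 2
  exact h2.sub h4

lemma hG1_deriv {t : ℝ} (ht : 0 < t) : HasDerivAt G1 (G2 t) t := by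
  have hD := hD_pos ht
  have hN := hN_pos t
  have h1 : HasDerivAt (fun s : ℝ => Real.exp (4 * s) * 4 + 10 * (Real.exp (2 * s) * 2))
      (Real.exp (4 * t) * 4 * 4 + 10 * (Real.exp (2 * t) * 2 * 2)) t :=
    ((hexp4 t).mul_const 4).add (((hexp2 t).mul_const 2).const_mul 10)
  have h2 : HasDerivAt (fun s : ℝ => Real.exp (4 * s) + 10 * Real.exp (2 * s) + 1)
      (Real.exp (4 * t) * 4 + 10 * (Real.exp (2 * t) * 2)) t :=
    ((hexp4 t).add ((hexp2 t).const_mul 10)).add_const 1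
  have hA := h1.div h2 hN.ne'
  have h3 : HasDerivAt (fun s : ℝ => Real.exp (2 * s) * 2)
      (Real.exp (2 * t) * 2 * 2) t := (hexp2 t).mul_const 2
  have h4 : HasDerivAt (fun s : ℝ => Real.exp (2 * s) - 1)
      (Real.exp (2 * t) * 2) t := (hexp2 t).sub_const 1
  have hB := (h3.div h4 hD.ne').const_mul 2
  exact hA.sub hB

lemma hG2_pos {t : ℝ} (ht : 0 < t) : 0 < G2 t := by
  have hD := hD_pos ht
  have hN := hN_pos t
  have hE4 : Real.exp (4 * t) = Real.exp (2 * t) ^ 2 := by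
    rw [sq, ← Real.exp_add]; ring_nf
  set u := Real.exp (2 * t) with hu
  have hu1 : 1 < u := by linarith
  unfold G2
  rw [hE4]
  have hT1 : 0 < (u ^ 2 * 4 * 4 + 10 * (u * 2 * 2)) * (u ^ 2 + 10 * u + 1) -
      (u ^ 2 * 4 + 10 * (u * 2)) * (u ^ 2 * 4 + 10 * (u * 2)) := by nlinarith
  have hT2 : u * 2 * 2 * (u - 1) - u * 2 * (u * 2) < 0 := by nlinarith
  have h1 : 0 < ((u ^ 2 * 4 * 4 + 10 * (u * 2 * 2)) * (u ^ 2 + 10 * u + 1) -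
      (u ^ 2 * 4 + 10 * (u * 2)) * (u ^ 2 * 4 + 10 * (u * 2))) / (u ^ 2 + 10 * u + 1) ^ 2 :=
    div_pos hT1 (by positivity)
  have h2 : (u * 2 * 2 * (u - 1) - u * 2 * (u * 2)) / (u - 1) ^ 2 < 0 :=
    div_neg_of_neg_of_pos hT2 (by positivity)
  nlinarith

/-- The Gauss curvature is negative: `K(ξ) < 0` for all `ξ > 0`. -/
theorem gauss_curvature_negative (ξ : ℝ) (hξ : 0 < ξ) : K ξ < 0 := by
  have hdlog : ∀ t ∈ Ioi (0 : ℝ), deriv (fun s => Real.log (P s)) t = G1 t := by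
    intro t ht
    have heq : (fun s => Real.log (P s)) =ᶠ[nhds t] G :=
      eventuallyEq_of_mem (Ioi_mem_nhds ht) (fun s hs => logP_eq hs)
    rw [heq.deriv_eq, (hG_deriv ht).deriv]
  have heq2 : deriv (fun s => Real.log (P s)) =ᶠ[nhds ξ] G1 :=
    eventuallyEq_of_mem (Ioi_mem_nhds hξ) hdlog
  have hdd : deriv (deriv (fun s => Real.log (P s))) ξ = G2 ξ := by
    rw [heq2.deriv_eq, (hG1_deriv hξ).deriv]
  have hP := hP_pos hξ
  have hG2 := hG2_pos hξ
  unfold K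
  rw [hdd]
  have : 0 < 1 / (2 * P ξ) * G2 ξ := mul_pos (by positivity) hG2
  linarith
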